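/- Let A be a monoidal category and T : A → A a functor. The construction sending an opmonoidal monad structure (μ, η, ψ, ψ₀) on T to the skew left warping (T, I, v, v₀, k) with v_{A,B} = (μ_A⊗1_{TB})∘ψ_{TA,B}, v₀ = ψ₀ and k_A = ρ_{TA}∘η_A, and the construction sending a skew left warping (T, I, v, v₀, k) with K = I to the opmonoidal monad structure with μ_A = ρ_{TA}⁻¹∘(1_{TA}⊗v₀)∘v_{A,I}∘T(ρ_{TA}), η_A = ρ_{TA}⁻¹∘k_A, ψ_{A,B} = v_{A,B}∘T(η_A⊗1_B), ψ₀ = v₀, are mutually inverse; hence there is a bijection between opmonoidal monad structures on T and skew left warpings of A with underlying functor T and K = I. -/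

import Mathlib

open CategoryTheory MonoidalCategory

variable {V : Type*} [Category V] [MonoidalCategory V]

/-- A skew left warping of the monoidal category `V` (Lack–Street, following Booker–Street):
a functor `T`, an object `K`, natural families `v_{X,Y} : T(TX ⊗ Y) ⟶ TX ⊗ TY` and
`k_X : X ⟶ TX ⊗ K`, and a morphism `v₀ : TK ⟶ I`, satisfying the five warping axioms
(W1)–(W5). -/
def IsSkewLeftWarping (T : V ⥤ V) (K : V)
    (v : ∀ X Y : V, T.obj (T.obj X ⊗ Y) ⟶ T.obj X ⊗ T.obj Y)
    (v₀ : T.obj K ⟶ 𝟙_ V) (k : ∀ X : V, X ⟶ T.obj X ⊗ K) : Prop :=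
  -- naturality of v
  (∀ (X X' Y Y' : V) (f : X ⟶ X') (g : Y ⟶ Y'),
    T.map (T.map f ⊗ₘ g) ≫ v X' Y' = v X Y ≫ (T.map f ⊗ₘ T.map g)) ∧
  -- naturality of k
  (∀ (X X' : V) (f : X ⟶ X'), f ≫ k X' = k X ≫ (T.map f ▷ K)) ∧
  -- (W1)
  (∀ X Y Z : V,
    v (T.obj X ⊗ Y) Z ≫ (v X Y ▷ T.obj Z) ≫ (α_ (T.obj X) (T.obj Y) (T.obj Z)).hom =
      T.map (v X Y ▷ Z) ≫ T.map (α_ (T.obj X) (T.obj Y) Z).hom ≫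
        v X (T.obj Y ⊗ Z) ≫ (T.obj X ◁ v Y Z)) ∧
  -- (W2)
  (∀ Y : V,
    v K Y ≫ (v₀ ▷ T.obj Y) ≫ (λ_ (T.obj Y)).hom =
      T.map (v₀ ▷ Y) ≫ T.map (λ_ Y).hom) ∧
  -- (W3)
  (∀ X : V, T.map (k X) ≫ v X K ≫ (T.obj X ◁ v₀) = (ρ_ (T.obj X)).inv) ∧
  -- (W4)
  (∀ X Y : V,
    k (T.obj X ⊗ Y) ≫ (v X Y ▷ K) ≫ (α_ (T.obj X) (T.obj Y) K).hom =
      T.obj X ◁ k Y) ∧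
  -- (W5)
  (k K ≫ (v₀ ▷ K) ≫ (λ_ K).hom = 𝟙 K)

/-- An opmonoidal monad on the monoidal category `V`: a monad `(T, μ, η)` together with an
opmonoidal structure `(ψ, ψ₀)` on `T` for which `μ` and `η` are opmonoidal natural
transformations. -/
def IsOpmonoidalMonad (T : V ⥤ V)
    (μ : ∀ X : V, T.obj (T.obj X) ⟶ T.obj X) (η : ∀ X : V, X ⟶ T.obj X)
    (ψ : ∀ X Y : V, T.obj (X ⊗ Y) ⟶ T.obj X ⊗ T.obj Y)
    (ψ₀ : T.obj (𝟙_ V) ⟶ 𝟙_ V) : Prop :=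
  -- naturality of μ and η
  (∀ (X Y : V) (f : X ⟶ Y), T.map (T.map f) ≫ μ Y = μ X ≫ T.map f) ∧
  (∀ (X Y : V) (f : X ⟶ Y), f ≫ η Y = η X ≫ T.map f) ∧
  -- monad axioms
  (∀ X : V, μ (T.obj X) ≫ μ X = T.map (μ X) ≫ μ X) ∧
  (∀ X : V, η (T.obj X) ≫ μ X = 𝟙 (T.obj X)) ∧
  (∀ X : V, T.map (η X) ≫ μ X = 𝟙 (T.obj X)) ∧
  -- naturality of ψ
  (∀ (X X' Y Y' : V) (f : X ⟶ X') (g : Y ⟶ Y'),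
    T.map (f ⊗ₘ g) ≫ ψ X' Y' = ψ X Y ≫ (T.map f ⊗ₘ T.map g)) ∧
  -- opmonoidal functor axioms: coassociativity and counitality of ψ
  (∀ X Y Z : V,
    T.map (α_ X Y Z).hom ≫ ψ X (Y ⊗ Z) ≫ (T.obj X ◁ ψ Y Z) =
      ψ (X ⊗ Y) Z ≫ (ψ X Y ▷ T.obj Z) ≫ (α_ (T.obj X) (T.obj Y) (T.obj Z)).hom) ∧
  (∀ X : V, ψ (𝟙_ V) X ≫ (ψ₀ ▷ T.obj X) ≫ (λ_ (T.obj X)).hom = T.map (λ_ X).hom) ∧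
  (∀ X : V, ψ X (𝟙_ V) ≫ (T.obj X ◁ ψ₀) ≫ (ρ_ (T.obj X)).hom = T.map (ρ_ X).hom) ∧
  -- μ is opmonoidal
  (∀ X Y : V,
    T.map (ψ X Y) ≫ ψ (T.obj X) (T.obj Y) ≫ (μ X ⊗ₘ μ Y) = μ (X ⊗ Y) ≫ ψ X Y) ∧
  (T.map ψ₀ ≫ ψ₀ = μ (𝟙_ V) ≫ ψ₀) ∧
  -- η is opmonoidal
  (∀ X Y : V, η (X ⊗ Y) ≫ ψ X Y = η X ⊗ₘ η Y) ∧
  (η (𝟙_ V) ≫ ψ₀ = 𝟙 (𝟙_ V))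

/-- For a functor `T` on a monoidal category `V`, the constructions
`(μ, η, ψ, ψ₀) ↦ (v_{X,Y} = (μ_X ⊗ 1) ∘ ψ_{TX,Y}, v₀ = ψ₀, k_X = ρ_{TX} ∘ η_X)` and
`(v, v₀, k) ↦ (μ_X = ρ⁻¹ ∘ (1 ⊗ v₀) ∘ v_{X,I} ∘ T(ρ), η_X = ρ⁻¹ ∘ k_X,
ψ_{X,Y} = v_{X,Y} ∘ T(η_X ⊗ 1), ψ₀ = v₀)` are mutually inverse, giving a bijection
between opmonoidal monad structures on `T` and skew left warpings of `V` with underlying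
functor `T` and `K = I`. -/
theorem opmonoidal_monad_skew_left_warping_bijection (T : V ⥤ V) :
    -- round trip starting from an opmonoidal monad
    (∀ (μ : ∀ X : V, T.obj (T.obj X) ⟶ T.obj X) (η : ∀ X : V, X ⟶ T.obj X)
        (ψ : ∀ X Y : V, T.obj (X ⊗ Y) ⟶ T.obj X ⊗ T.obj Y)
        (ψ₀ : T.obj (𝟙_ V) ⟶ 𝟙_ V),
      IsOpmonoidalMonad T μ η ψ ψ₀ →
        ((∀ X : V,
            T.map (ρ_ (T.obj X)).inv ≫ (ψ (T.obj X) (𝟙_ V) ≫ (μ X ▷ T.obj (𝟙_ V))) ≫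
              (T.obj X ◁ ψ₀) ≫ (ρ_ (T.obj X)).hom = μ X) ∧
         (∀ X : V, (η X ≫ (ρ_ (T.obj X)).inv) ≫ (ρ_ (T.obj X)).hom = η X) ∧
         (∀ X Y : V,
            T.map (((η X ≫ (ρ_ (T.obj X)).inv) ≫ (ρ_ (T.obj X)).hom) ▷ Y) ≫
              (ψ (T.obj X) Y ≫ (μ X ▷ T.obj Y)) = ψ X Y))) ∧
    -- round trip starting from a skew left warping with K = I
    (∀ (v : ∀ X Y : V, T.obj (T.obj X ⊗ Y) ⟶ T.obj X ⊗ T.obj Y)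
        (v₀ : T.obj (𝟙_ V) ⟶ 𝟙_ V) (k : ∀ X : V, X ⟶ T.obj X ⊗ 𝟙_ V),
      IsSkewLeftWarping T (𝟙_ V) v v₀ k →
        ((∀ X Y : V,
            (T.map ((k (T.obj X) ≫ (ρ_ (T.obj (T.obj X))).hom) ▷ Y) ≫ v (T.obj X) Y) ≫
              ((T.map (ρ_ (T.obj X)).inv ≫ v X (𝟙_ V) ≫ (T.obj X ◁ v₀) ≫
                  (ρ_ (T.obj X)).hom) ▷ T.obj Y) = v X Y) ∧
         (∀ X : V, (k X ≫ (ρ_ (T.obj X)).hom) ≫ (ρ_ (T.obj X)).inv = k X))) := by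
  constructor
  · rintro μ η ψ ψ₀ ⟨natμ, natη, massoc, munitl, munitr, natψ, coassoc, counitl, counitr,
      μop, μop0, ηop, ηop0⟩
    refine ⟨?_, ?_, ?_⟩
    · intro X
      slice_lhs 3 4 => rw [← whisker_exchange]
      slice_lhs 4 5 => rw [rightUnitor_naturality]
      slice_lhs 2 4 => rw [counitr (T.obj X)]
      slice_lhs 1 2 => rw [← CategoryTheory.Functor.map_comp, Iso.inv_hom_id, CategoryTheory.Functor.map_id]
      simp
    · intro X; simp
    · intro X Y
      have h1 : ((η X ≫ (ρ_ (T.obj X)).inv) ≫ (ρ_ (T.obj X)).hom) ▷ Y = η X ▷ Y := by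
        simp
      rw [h1]
      have h2 : T.map (η X ▷ Y) ≫ ψ (T.obj X) Y = ψ X Y ≫ (T.map (η X) ▷ T.obj Y) := by
        have := natψ X (T.obj X) Y Y (η X) (𝟙 Y)
        simpa [tensorHom_id] using this
      rw [← Category.assoc, h2]
      rw [Category.assoc, ← comp_whiskerRight, munitr X, id_whiskerRight, Category.comp_id]
  · rintro v v₀ k ⟨natv, natk, w1, w2, w3, w4, w5⟩
    have key : ∀ X : V, k (T.obj X) ≫ (ρ_ (T.obj (T.obj X))).hom ≫
        T.map (ρ_ (T.obj X)).inv ≫ v X (𝟙_ V) ≫ (T.obj X ◁ v₀) ≫ (ρ_ (T.obj X)).hom =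
        𝟙 (T.obj X) := by
      intro X
      slice_lhs 2 3 => rw [← rightUnitor_naturality]
      slice_lhs 1 2 => rw [← natk (T.obj X) (T.obj X ⊗ 𝟙_ V) (ρ_ (T.obj X)).inv]
      slice_lhs 3 4 => rw [← rightUnitor_naturality]
      slice_lhs 4 5 => rw [← rightUnitor_naturality]
      slice_lhs 5 6 => rw [← rightUnitor_naturality]
      have t1 : k (T.obj X ⊗ 𝟙_ V) ≫ (v X (𝟙_ V) ▷ 𝟙_ V) =
          (T.obj X ◁ k (𝟙_ V)) ≫ (α_ (T.obj X) (T.obj (𝟙_ V)) (𝟙_ V)).inv := by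
        rw [Iso.eq_comp_inv, Category.assoc]; exact w4 X (𝟙_ V)
      slice_lhs 2 3 => rw [t1]
      have t2 : (α_ (T.obj X) (T.obj (𝟙_ V)) (𝟙_ V)).inv ≫
          ((T.obj X ◁ v₀) ▷ 𝟙_ V) ≫ ((ρ_ (T.obj X)).hom ▷ 𝟙_ V) =
          (T.obj X ◁ (v₀ ▷ 𝟙_ V)) ≫ (T.obj X ◁ (λ_ (𝟙_ V)).hom) := by
        rw [← associator_inv_naturality_middle_assoc, triangle_assoc_comp_right]
      slice_lhs 3 5 => rw [t2]
      slice_lhs 2 4 => rw [← MonoidalCategory.whiskerLeft_comp,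
        ← MonoidalCategory.whiskerLeft_comp, w5, MonoidalCategory.whiskerLeft_id]
      simp
    refine ⟨?_, ?_⟩
    · intro X Y
      have b1 : v (T.obj X) Y ≫ (T.map (ρ_ (T.obj X)).inv ▷ T.obj Y) =
          T.map (T.map (ρ_ (T.obj X)).inv ▷ Y) ≫ v (T.obj X ⊗ 𝟙_ V) Y := by
        have := natv (T.obj X) (T.obj X ⊗ 𝟙_ V) Y Y (ρ_ (T.obj X)).inv (𝟙 Y)
        simp only [CategoryTheory.Functor.map_id, tensorHom_id] at this
        exact this.symm
      have b2 : v (T.obj X ⊗ 𝟙_ V) Y ≫ (v X (𝟙_ V) ▷ T.obj Y) =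
          T.map (v X (𝟙_ V) ▷ Y) ≫ T.map (α_ (T.obj X) (T.obj (𝟙_ V)) Y).hom ≫
            v X (T.obj (𝟙_ V) ⊗ Y) ≫ (T.obj X ◁ v (𝟙_ V) Y) ≫
            (α_ (T.obj X) (T.obj (𝟙_ V)) (T.obj Y)).inv := by
        have h := w1 X (𝟙_ V) Y
        rw [← Category.assoc, ← Iso.eq_comp_inv] at h
        simpa only [Category.assoc] using h
      have b3 : (α_ (T.obj X) (T.obj (𝟙_ V)) (T.obj Y)).inv ≫
          ((T.obj X ◁ v₀) ▷ T.obj Y) ≫ ((ρ_ (T.obj X)).hom ▷ T.obj Y) =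
          (T.obj X ◁ (v₀ ▷ T.obj Y)) ≫ (T.obj X ◁ (λ_ (T.obj Y)).hom) := by
        rw [← associator_inv_naturality_middle_assoc, triangle_assoc_comp_right]
      have b5 : v X (T.obj (𝟙_ V) ⊗ Y) ≫ (T.obj X ◁ T.map ((v₀ ▷ Y) ≫ (λ_ Y).hom)) =
          T.map (T.obj X ◁ ((v₀ ▷ Y) ≫ (λ_ Y).hom)) ≫ v X Y := by
        have := natv X X (T.obj (𝟙_ V) ⊗ Y) Y (𝟙 X) ((v₀ ▷ Y) ≫ (λ_ Y).hom)
        simp only [CategoryTheory.Functor.map_id, id_tensorHom] at this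
        exact this.symm
      have hC : (k (T.obj X) ▷ Y) ≫ ((ρ_ (T.obj (T.obj X))).hom ▷ Y) ≫
          (T.map (ρ_ (T.obj X)).inv ▷ Y) ≫ (v X (𝟙_ V) ▷ Y) ≫
          (α_ (T.obj X) (T.obj (𝟙_ V)) Y).hom ≫
          (T.obj X ◁ ((v₀ ▷ Y) ≫ (λ_ Y).hom)) = 𝟙 (T.obj X ⊗ Y) := by
        rw [MonoidalCategory.whiskerLeft_comp, ← associator_naturality_middle_assoc,
          MonoidalCategory.triangle]
        simp only [← comp_whiskerRight, Category.assoc]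
        rw [key X, id_whiskerRight]
      simp only [comp_whiskerRight, CategoryTheory.Functor.map_comp, Category.assoc]
      slice_lhs 3 4 => rw [b1]
      slice_lhs 4 5 => rw [b2]
      slice_lhs 8 10 => rw [b3]
      slice_lhs 7 9 => rw [← MonoidalCategory.whiskerLeft_comp,
        ← MonoidalCategory.whiskerLeft_comp, w2 Y, ← CategoryTheory.Functor.map_comp]
      slice_lhs 6 7 => rw [b5]
      simp only [← CategoryTheory.Functor.map_comp_assoc]
      rw [hC, CategoryTheory.Functor.map_id, Category.id_comp]
    · intro X; simp
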